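/- Let 0 < p < ∞ and -n/p ≤ λ < 0. Set 1/p̃ = 1 + 1/p and λ̃ = λ - n. Then for f in the Morrey space M^{p,λ}(ℝⁿ) and g ∈ L¹(ℝⁿ), the product fg belongs to M^{p̃,λ̃}(ℝⁿ) and ‖fg‖_{M^{p̃,λ̃}} ≲ ‖f‖_{M^{p,λ}} ‖g‖_{L¹}. -/

import Mathlib

open MeasureTheory
open scoped ENNReal NNReal

/-- A cube in `ℝⁿ` with sides parallel to the axes, lower corner `a`, side length `r`. -/
def cube (n : ℕ) (a : EuclideanSpace ℝ (Fin n)) (r : ℝ) : Set (EuclideanSpace ℝ (Fin n)) :=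
  {x | ∀ i, a i ≤ x i ∧ x i ≤ a i + r}

/-- The Morrey norm `‖f‖_{M^{p,λ}} = sup_Q |Q|^{-λ/n} (|Q|^{-1} ∫_Q |f|^p)^{1/p}`. -/
noncomputable def morreyNorm (n : ℕ) (p lam : ℝ) (f : EuclideanSpace ℝ (Fin n) → ℝ) : ℝ≥0∞ :=
  ⨆ (a : EuclideanSpace ℝ (Fin n)) (r : ℝ) (_ : 0 < r),
    volume (cube n a r) ^ (-(lam / n)) *
      ((volume (cube n a r))⁻¹ * ∫⁻ x in cube n a r, ENNReal.ofReal |f x| ^ p) ^ (1 / p)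

lemma cube_vol {n : ℕ} (a : EuclideanSpace ℝ (Fin n)) (r : ℝ) :
    volume (cube n a r) = ENNReal.ofReal r ^ n := by
  have h1 : cube n a r = (MeasurableEquiv.toLp 2 (Fin n → ℝ)).symm ⁻¹'
      (Set.univ.pi fun i => Set.Icc (a i) (a i + r)) := by
    ext x
    simp only [cube, Set.mem_setOf_eq, Set.mem_preimage, Set.mem_pi, Set.mem_univ, true_implies,
      Set.mem_Icc]
    rfl
  rw [h1, (EuclideanSpace.volume_preserving_symm_measurableEquiv_toLp (Fin n)).measure_preimage
      (MeasurableSet.univ_pi fun i => measurableSet_Icc).nullMeasurableSet,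
    volume_pi_pi]
  simp [Real.volume_Icc]


/-- Let `0 < p < ∞`, `-n/p ≤ λ < 0`, `1/p̃ = 1 + 1/p`, `λ̃ = λ - n`.  For
`f ∈ M^{p,λ}(ℝⁿ)` and `g ∈ L¹(ℝⁿ)`, the product `fg` belongs to `M^{p̃,λ̃}(ℝⁿ)` and
`‖fg‖_{M^{p̃,λ̃}} ≲ ‖f‖_{M^{p,λ}} ‖g‖_{L¹}`. -/
theorem stmt_7 {n : ℕ} (hn : 0 < n) (p lam pt : ℝ) (hp : 0 < p)
    (hlam₁ : -(n / p) ≤ lam) (hlam₂ : lam < 0) (hpt : 1 / pt = 1 + 1 / p) :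
    ∃ C : ℝ≥0∞, 0 < C ∧ C < ∞ ∧
      ∀ f g : EuclideanSpace ℝ (Fin n) → ℝ, Measurable f → Measurable g →
        morreyNorm n p lam f ≠ ∞ → (∫⁻ x, ENNReal.ofReal |g x|) ≠ ∞ →
        morreyNorm n pt (lam - n) (fun x => f x * g x) ≠ ∞ ∧
        morreyNorm n pt (lam - n) (fun x => f x * g x) ≤
          C * morreyNorm n p lam f * ∫⁻ x, ENNReal.ofReal |g x| := by
  have hpt0 : 0 < pt := by
    have h1 : 0 < 1 / pt := by rw [hpt]; positivity
    exact one_div_pos.mp h1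
  have hnR : (0:ℝ) < n := Nat.cast_pos.mpr hn
  refine ⟨1, zero_lt_one, ENNReal.one_lt_top, fun f g hf hg hFf hFg => ?_⟩
  set Nf := morreyNorm n p lam f with hNf
  set Ng := ∫⁻ x, ENNReal.ofReal |g x| with hNg
  have main : morreyNorm n pt (lam - n) (fun x => f x * g x) ≤ Nf * Ng := by
    refine iSup_le fun a => iSup_le fun r => iSup_le fun hr => ?_
    set Q := cube n a r with hQ
    set v := volume Q with hv
    have hv0 : v ≠ 0 := by
      rw [hv, hQ, cube_vol]
      exact pow_ne_zero _ (ENNReal.ofReal_pos.mpr hr).ne'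
    have hvt : v ≠ ∞ := by
      rw [hv, hQ, cube_vol]
      exact ENNReal.pow_ne_top ENNReal.ofReal_ne_top
    set A := ∫⁻ x in Q, ENNReal.ofReal |f x| ^ p with hA
    set B := ∫⁻ x in Q, ENNReal.ofReal |g x| with hB
    set I := ∫⁻ x in Q, ENNReal.ofReal |f x * g x| ^ pt with hI
    -- Hölder
    have hkey : p = (p + 1) * pt := by
      have h := hpt
      field_simp at h
      linarith
    have hconj : (p / pt).HolderConjugate (1 / pt) := by
      rw [Real.holderConjugate_iff]; constructor
      · have h1 : p / pt = p * (1 / pt) := by ring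
        have h2 : p * (1 + 1 / p) = p + 1 := by field_simp
        rw [h1, hpt, h2]
        linarith
      · have hpne : p ≠ 0 := hp.ne'
        field_simp
        nlinarith [hkey]
    have holder : I ≤ A ^ (pt / p) * B ^ pt := by
      have h1 : I = ∫⁻ x in Q,
          (fun x => ENNReal.ofReal |f x| ^ pt) x * (fun x => ENNReal.ofReal |g x| ^ pt) x := by
        rw [hI]
        congr 1
        ext x
        rw [abs_mul, ENNReal.ofReal_mul (abs_nonneg _),
          ENNReal.mul_rpow_of_nonneg _ _ hpt0.le]
      have h2 := ENNReal.lintegral_mul_le_Lp_mul_Lq (volume.restrict Q) hconj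
        (hf.abs.ennreal_ofReal.pow_const pt).aemeasurable
        (hg.abs.ennreal_ofReal.pow_const pt).aemeasurable
      simp only [Pi.mul_apply] at h2
      rw [h1]
      refine le_trans h2 ?_
      have e1 : ∀ x, (ENNReal.ofReal |f x| ^ pt) ^ (p / pt) = ENNReal.ofReal |f x| ^ p := by
        intro x
        rw [← ENNReal.rpow_mul]
        congr 1
        field_simp
      have e2 : ∀ x, (ENNReal.ofReal |g x| ^ pt) ^ (1 / pt) = ENNReal.ofReal |g x| := by
        intro x
        rw [← ENNReal.rpow_mul, mul_one_div, div_self hpt0.ne', ENNReal.rpow_one]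
      simp only [e1, e2, one_div_one_div, one_div_div, div_one]
      exact le_rfl
    -- the term for fg is bounded
    have key : v ^ (-((lam - n) / n)) * (v⁻¹ * I) ^ (1 / pt)
        ≤ (v ^ (-(lam / n)) * (v⁻¹ * A) ^ (1 / p)) * B := by
      have step : v ^ (-((lam - n) / n)) * (v⁻¹ * I) ^ (1 / pt)
          ≤ v ^ (-((lam - n) / n)) * (v⁻¹ * (A ^ (pt / p) * B ^ pt)) ^ (1 / pt) :=
        mul_le_mul_right (ENNReal.rpow_le_rpow (mul_le_mul_right holder _) (by positivity)) _
      refine le_trans step (le_of_eq ?_)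
      have vmul : ∀ (c d : ℝ) (X : ℝ≥0∞), v ^ c * (v ^ d * X) = v ^ (c + d) * X := by
        intro c d X
        rw [← mul_assoc, ← ENNReal.rpow_add _ _ hv0 hvt]
      rw [ENNReal.mul_rpow_of_nonneg _ _ (by positivity : (0:ℝ) ≤ 1/pt),
        ENNReal.mul_rpow_of_nonneg _ _ (by positivity : (0:ℝ) ≤ 1/pt),
        ENNReal.mul_rpow_of_nonneg _ _ (by positivity : (0:ℝ) ≤ 1/p),
        ← ENNReal.rpow_mul, ← ENNReal.rpow_mul,
        ENNReal.inv_rpow, ENNReal.inv_rpow, ← ENNReal.rpow_neg, ← ENNReal.rpow_neg]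
      have eA : pt / p * (1 / pt) = 1 / p := by field_simp
      have eB : pt * (1 / pt) = 1 := by field_simp
      have eV : -((lam - n) / n) + -(1 / pt) = -(lam / n) + -(1 / p) := by
        rw [hpt]
        field_simp
        ring
      rw [eA, eB, ENNReal.rpow_one, vmul, vmul, eV, ← mul_assoc]
    have hfterm : v ^ (-(lam / n)) * (v⁻¹ * A) ^ (1 / p) ≤ Nf := by
      rw [hNf, morreyNorm]
      exact le_iSup_of_le a (le_iSup_of_le r (le_iSup_of_le hr le_rfl))
    have hBle : B ≤ Ng := setLIntegral_le_lintegral _ _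
    exact le_trans key (mul_le_mul' hfterm hBle)
  constructor
  · exact ne_top_of_le_ne_top (ENNReal.mul_ne_top hFf hFg) main
  · rw [one_mul]; exact main
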